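/- Let t₀ < T be real numbers and let u : [t₀,T] × ℝ → ℝ be a continuous bounded function. Let A be a nonempty index set and let (x_α)_{α∈A} be a family of differentiable functions x_α : [t₀,T] → ℝ satisfying x_α'(t) = u(t, x_α(t)) for all t ∈ [t₀,T], and suppose the set {x_α(t₀) : α ∈ A} is bounded. Then the function y(t) := sup_{α∈A} x_α(t) is real-valued and differentiable with y'(t) = u(t, y(t)) for all t ∈ [t₀,T], and similarly z(t) := inf_{α∈A} x_α(t) is real-valued and differentiable with z'(t) = u(t, z(t)) for all t ∈ [t₀,T]. -/

import Mathlib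

open Set Filter Topology

-- Lipschitz estimate for solutions
lemma lip_aux {t₀ T M : ℝ} {u : ℝ → ℝ → ℝ} {f : ℝ → ℝ}
    (hM : ∀ t ∈ Set.Icc t₀ T, ∀ x : ℝ, |u t x| ≤ M)
    (hf : ∀ t ∈ Set.Icc t₀ T, HasDerivWithinAt f (u t (f t)) (Set.Icc t₀ T) t)
    {s r : ℝ} (hs : s ∈ Set.Icc t₀ T) (hr : r ∈ Set.Icc t₀ T) :
    |f s - f r| ≤ M * |s - r| := by
  have := Convex.norm_image_sub_le_of_norm_hasDerivWithin_le
    (f := f) (f' := fun t => u t (f t)) (s := Set.Icc t₀ T) (C := M)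
    hf (fun t ht => by simpa using hM t ht (f t)) (convex_Icc _ _) hr hs
  simpa [Real.norm_eq_abs] using this

-- local estimate with linear part
lemma lin_aux {t₀ T L ε : ℝ} {u : ℝ → ℝ → ℝ} {f : ℝ → ℝ} {J : Set ℝ}
    (hJ : Convex ℝ J) (hJsub : J ⊆ Set.Icc t₀ T)
    (hf : ∀ t ∈ Set.Icc t₀ T, HasDerivWithinAt f (u t (f t)) (Set.Icc t₀ T) t)
    (hclose : ∀ r ∈ J, |u r (f r) - L| ≤ ε)
    {s t : ℝ} (hs : s ∈ J) (ht : t ∈ J) :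
    |f s - f t - (s - t) * L| ≤ ε * |s - t| := by
  have hg : ∀ r ∈ J, HasDerivWithinAt (fun r => f r - r * L) (u r (f r) - L) J r := by
    intro r hr
    exact ((hf r (hJsub hr)).mono hJsub).sub
      ((hasDerivWithinAt_id r J).mul_const L |>.congr_deriv (by ring))
  have := Convex.norm_image_sub_le_of_norm_hasDerivWithin_le
    (f := fun r => f r - r * L) (f' := fun r => u r (f r) - L) (s := J) (C := ε)
    hg (fun r hr => by simpa using hclose r hr) hJ ht hs
  have h2 : f s - s * L - (f t - t * L) = f s - f t - (s - t) * L := by ring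
  simpa [Real.norm_eq_abs, h2] using this

set_option maxHeartbeats 1000000 in
lemma sup_aux (t₀ T : ℝ) (hT : t₀ < T) (u : ℝ → ℝ → ℝ)
    (hu_cont : ContinuousOn (fun p : ℝ × ℝ => u p.1 p.2) (Set.Icc t₀ T ×ˢ Set.univ))
    (M : ℝ) (hM : ∀ t ∈ Set.Icc t₀ T, ∀ x : ℝ, |u t x| ≤ M)
    (A : Type*) (hA : Nonempty A) (x : A → ℝ → ℝ)
    (hx : ∀ α : A, ∀ t ∈ Set.Icc t₀ T,
      HasDerivWithinAt (x α) (u t (x α t)) (Set.Icc t₀ T) t)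
    (hbddA : BddAbove (Set.range fun α => x α t₀)) :
    (∀ t ∈ Set.Icc t₀ T, BddAbove (Set.range fun α => x α t)) ∧
    (∀ t ∈ Set.Icc t₀ T,
      HasDerivWithinAt (fun s => ⨆ α, x α s) (u t (⨆ α, x α t)) (Set.Icc t₀ T) t) := by
  have ht₀ : t₀ ∈ Set.Icc t₀ T := ⟨le_refl _, hT.le⟩
  have hM0 : 0 ≤ M := le_trans (abs_nonneg _) (hM t₀ ht₀ 0)
  obtain ⟨B, hB⟩ := hbddA
  have hbdd : ∀ t ∈ Set.Icc t₀ T, BddAbove (Set.range fun α => x α t) := by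
    intro t ht
    refine ⟨B + M * (T - t₀), ?_⟩
    rintro _ ⟨α, rfl⟩
    have h1 := lip_aux hM (hx α) ht ht₀
    have h2 : x α t₀ ≤ B := hB ⟨α, rfl⟩
    have h3 : |t - t₀| ≤ T - t₀ := by
      rw [abs_le]; constructor <;> [linarith [ht.1]; linarith [ht.2]]
    have h4 := abs_le.mp h1
    nlinarith
  refine ⟨hbdd, ?_⟩
  intro t ht
  set c := ⨆ α, x α t with hc
  set L := u t c with hL
  rw [hasDerivWithinAt_iff_isLittleO, Asymptotics.isLittleO_iff]
  intro ε hε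
  -- continuity of u at (t, c)
  have hcw : ContinuousWithinAt (fun p : ℝ × ℝ => u p.1 p.2)
      (Set.Icc t₀ T ×ˢ Set.univ) (t, c) := hu_cont (t, c) ⟨ht, trivial⟩
  rw [Metric.continuousWithinAt_iff] at hcw
  obtain ⟨δ, hδpos, hδ⟩ := hcw (ε / 2) (by positivity)
  have hδ' : ∀ r ∈ Set.Icc t₀ T, ∀ ξ : ℝ, |r - t| < δ → |ξ - c| < δ →
      |u r ξ - L| ≤ ε / 2 := by
    intro r hr ξ h1 h2
    have := hδ (x := (r, ξ)) ⟨hr, trivial⟩ (by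
      rw [Prod.dist_eq, Real.dist_eq, Real.dist_eq]
      exact max_lt h1 h2)
    rw [Real.dist_eq] at this
    exact this.le
  set D := M + |L| + ε + 1 with hD
  have hDpos : 0 < D := by have := abs_nonneg L; positivity
  set δ'' := δ / (2 * D) with hδ''
  have hδ''pos : 0 < δ'' := by positivity
  have hδ''δ : δ'' < δ := by
    rw [hδ'']
    have h1 : 1 < 2 * D := by have := abs_nonneg L; nlinarith
    calc δ / (2 * D) < δ / 1 := by apply div_lt_div_of_pos_left hδpos one_pos h1
    _ = δ := div_one δ
  have hii : (M + |L| + ε) * δ'' ≤ δ / 2 := by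
    have h1 : (M + |L| + ε) * δ'' ≤ D * δ'' :=
      mul_le_mul_of_nonneg_right (by linarith) hδ''pos.le
    have h2 : D * δ'' = δ / 2 := by rw [hδ'']; field_simp
    linarith
  rw [eventually_nhdsWithin_iff, Metric.eventually_nhds_iff]
  refine ⟨δ'', hδ''pos, ?_⟩
  intro s hdist hs
  rw [Real.dist_eq] at hdist
  have hst : |s - t| ≤ δ'' := hdist.le
  -- the small interval J
  set J := Set.Icc t₀ T ∩ Set.Icc (t - δ'') (t + δ'') with hJ
  have hJconv : Convex ℝ J := (convex_Icc _ _).inter (convex_Icc _ _)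
  have hJsub : J ⊆ Set.Icc t₀ T := Set.inter_subset_left
  have htJ : t ∈ J := ⟨ht, by constructor <;> linarith⟩
  have hsJ : s ∈ J := ⟨hs, by
    have := abs_le.mp hst; constructor <;> linarith [this.1, this.2]⟩
  -- estimate for solutions close to the sup at time t
  have hcase1 : ∀ α : A, c - δ / 2 ≤ x α t →
      |x α s - x α t - (s - t) * L| ≤ (ε / 2) * |s - t| := by
    intro α hα
    refine lin_aux hJconv hJsub (hx α) ?_ hsJ htJ
    intro r hr
    have hxαt : x α t ≤ c := le_ciSup (hbdd t ht) α
    have hlip := abs_le.mp (lip_aux hM (hx α) (hJsub hr) ht)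
    have hrt : |r - t| ≤ δ'' := by
      have := hr.2; rw [abs_le]; constructor <;> linarith [this.1, this.2]
    have hξ : |x α r - c| < δ := by
      rw [abs_lt]
      have hM'' : M * |r - t| ≤ M * δ'' := mul_le_mul_of_nonneg_left hrt hM0
      have habs := abs_le.mp (lip_aux hM (hx α) (hJsub hr) ht)
      have hMδ : M * δ'' < δ / 2 := by
        nlinarith [mul_pos (show (0:ℝ) < |L| + ε by positivity) hδ''pos]
      constructor <;> nlinarith
    exact hδ' r (hJsub hr) (x α r) (lt_of_le_of_lt hrt hδ''δ) hξ
  -- upper bound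
  have hub : (⨆ α, x α s) ≤ c + (s - t) * L + ε * |s - t| := by
    apply ciSup_le
    intro α
    by_cases hα : c - δ / 2 ≤ x α t
    · have h1 := abs_le.mp (hcase1 α hα)
      have hxαt : x α t ≤ c := le_ciSup (hbdd t ht) α
      have : (ε / 2) * |s - t| ≤ ε * |s - t| := by
        apply mul_le_mul_of_nonneg_right (by linarith) (abs_nonneg _)
      linarith [h1.2]
    · push_neg at hα
      have hlip := abs_le.mp (lip_aux hM (hx α) hs ht)
      have hL1 : -(|s - t| * |L|) ≤ (s - t) * L := by
        have := neg_abs_le ((s - t) * L)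
        rwa [abs_mul] at this
      have hMst : (M + |L|) * |s - t| ≤ δ / 2 := by
        have h5 : (M + |L|) * |s - t| ≤ (M + |L| + ε) * δ'' := by
          apply mul_le_mul (by linarith) hst (abs_nonneg _) (by positivity)
        linarith
      nlinarith [abs_nonneg (s - t), mul_nonneg hε.le (abs_nonneg (s - t))]
  -- lower bound
  have hlb : c + (s - t) * L - ε * |s - t| ≤ ⨆ α, x α s := by
    rcases eq_or_ne s t with rfl | hne
    · simp [hc]
    · have hpos : 0 < |s - t| := abs_pos.mpr (sub_ne_zero.mpr hne)
      have hlt : c - (ε / 2) * |s - t| < c := by nlinarith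
      obtain ⟨α, hα⟩ := exists_lt_of_lt_ciSup hlt
      have hαδ : c - δ / 2 ≤ x α t := by
        have : (ε / 2) * |s - t| ≤ δ / 2 := by
          have : (ε / 2) * |s - t| ≤ (M + |L| + ε) * δ'' := by
            apply mul_le_mul (by linarith [abs_nonneg L]) hst (abs_nonneg _) (by positivity)
          linarith
        linarith
      have h1 := abs_le.mp (hcase1 α hαδ)
      have : c + (s - t) * L - ε * |s - t| ≤ x α s := by nlinarith [h1.1]
      exact le_trans this (le_ciSup (hbdd s hs) α)
  -- conclude
  simp only [Real.norm_eq_abs, smul_eq_mul]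
  rw [abs_le]
  constructor
  · linarith [hlb]
  · linarith [hub]

lemma real_iInf_neg {A : Type*} (f : A → ℝ) : (⨅ α, f α) = -⨆ α, -f α := by
  rw [iInf, iSup, Real.sInf_def]
  congr 2
  ext y
  constructor
  · rintro ⟨a, ha⟩
    exact ⟨a, by simp [ha]⟩
  · rintro ⟨a, rfl⟩
    exact ⟨a, by simp⟩

/-- for a continuous bounded `u : [t₀,T] × ℝ → ℝ` and a nonempty family of
solutions `x_α` of `x' = u(t,x)` on `[t₀,T]` whose values at `t₀` form a bounded set, the
pointwise supremum `y(t) = ⨆ α, x_α(t)` is real-valued (i.e. the sets `{x_α(t) : α}`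
remain bounded) and solves `y' = u(t,y)` on `[t₀,T]` (one-sided derivatives at the
endpoints), and likewise for the pointwise infimum. -/
theorem stmt0 (t₀ T : ℝ) (hT : t₀ < T) (u : ℝ → ℝ → ℝ)
    (hu_cont : ContinuousOn (fun p : ℝ × ℝ => u p.1 p.2) (Set.Icc t₀ T ×ˢ Set.univ))
    (hu_bdd : ∃ M : ℝ, ∀ t ∈ Set.Icc t₀ T, ∀ x : ℝ, |u t x| ≤ M)
    (A : Type*) (hA : Nonempty A) (x : A → ℝ → ℝ)
    (hx : ∀ α : A, ∀ t ∈ Set.Icc t₀ T,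
      HasDerivWithinAt (x α) (u t (x α t)) (Set.Icc t₀ T) t)
    (hbddA : BddAbove (Set.range fun α => x α t₀))
    (hbddB : BddBelow (Set.range fun α => x α t₀)) :
    (∀ t ∈ Set.Icc t₀ T,
      BddAbove (Set.range fun α => x α t) ∧ BddBelow (Set.range fun α => x α t)) ∧
    (∀ t ∈ Set.Icc t₀ T,
      HasDerivWithinAt (fun s => ⨆ α, x α s) (u t (⨆ α, x α t)) (Set.Icc t₀ T) t) ∧
    (∀ t ∈ Set.Icc t₀ T,
      HasDerivWithinAt (fun s => ⨅ α, x α s) (u t (⨅ α, x α t)) (Set.Icc t₀ T) t) := by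
  obtain ⟨M, hM⟩ := hu_bdd
  -- the reflected equation
  set v : ℝ → ℝ → ℝ := fun r ξ => -u r (-ξ) with hv
  have hv_cont : ContinuousOn (fun p : ℝ × ℝ => v p.1 p.2) (Set.Icc t₀ T ×ˢ Set.univ) := by
    apply ContinuousOn.neg
    have hg : Continuous (fun p : ℝ × ℝ => ((p.1, -p.2) : ℝ × ℝ)) := by continuity
    exact hu_cont.comp hg.continuousOn (fun p hp => ⟨hp.1, trivial⟩)
  have hv_bdd : ∀ t ∈ Set.Icc t₀ T, ∀ ξ : ℝ, |v t ξ| ≤ M := by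
    intro t ht ξ
    simpa [hv, abs_neg] using hM t ht (-ξ)
  have hz : ∀ α : A, ∀ t ∈ Set.Icc t₀ T,
      HasDerivWithinAt (fun s => -x α s) (v t (-x α t)) (Set.Icc t₀ T) t := by
    intro α t ht
    have := (hx α t ht).fun_neg
    simpa [hv] using this
  have hbddz : BddAbove (Set.range fun α => -x α t₀) := by
    obtain ⟨b, hb⟩ := hbddB
    exact ⟨-b, by rintro _ ⟨α, rfl⟩; simpa using neg_le_neg (hb ⟨α, rfl⟩)⟩
  obtain ⟨hbdd1, hsup⟩ := sup_aux t₀ T hT u hu_cont M hM A hA x hx hbddA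
  obtain ⟨hbdd2, hsup2⟩ := sup_aux t₀ T hT v hv_cont M hv_bdd A hA
    (fun α s => -x α s) hz hbddz
  refine ⟨?_, hsup, ?_⟩
  · intro t ht
    refine ⟨hbdd1 t ht, ?_⟩
    obtain ⟨b, hb⟩ := hbdd2 t ht
    exact ⟨-b, by rintro _ ⟨α, rfl⟩; have := hb ⟨α, rfl⟩; simp at this ⊢; linarith⟩
  · intro t ht
    have h := (hsup2 t ht).fun_neg
    have hfun : (fun s => ⨅ α, x α s) = fun s => -⨆ α, -x α s := by
      funext s; exact real_iInf_neg _
    rw [hfun]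
    refine h.congr_deriv ?_
    rw [hv]
    have : (⨅ α, x α t) = -⨆ α, -x α t := real_iInf_neg _
    simp only [this]
    simp
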